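/- arXiv:2401.18023 — 2 statements merged into one kernel-verified Lean document; each statement's English description precedes it below -/
import Mathlib

section
/- Let (Y, X) be a random vector with X absolutely continuous (P(Xᵀu = 0) = 0 for u ≠ 0), E[‖X‖²] < ∞, E[Y²] < ∞, E[‖YX‖] < ∞, let A be a fixed matrix, λ ≥ 0, and B ⊆ ℝ^{p+1} nonempty closed convex. Then the problem min_{β ∈ B} E[(Y − Xᵀβ)² + λ‖Aβ‖₁] has a unique optimal solution. -/
set_option linter.unusedSectionVars false

open MeasureTheory Matrix RealInnerProductSpace

section CSCAux

variable {Ω : Type*} [MeasurableSpace Ω] {μ : Measure Ω} [IsProbabilityMeasure μ]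
variable {n : ℕ} {Y : Ω → ℝ} {X : Ω → EuclideanSpace ℝ (Fin n)}

lemma csc_dot_eq_inner (x y : EuclideanSpace ℝ (Fin n)) : ∑ i, x i * y i = ⟪x, y⟫ := by
  simp [PiLp.inner_apply, RCLike.inner_apply]
  exact Finset.sum_congr rfl fun i _ => mul_comm _ _

lemma csc_abs_apply_le_norm (x : EuclideanSpace ℝ (Fin n)) (i : Fin n) : |x i| ≤ ‖x‖ := by
  rw [EuclideanSpace.norm_eq]
  have h1 : |x i| = Real.sqrt (‖x i‖ ^ 2) := by rw [Real.sqrt_sq_eq_abs]; simp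
  rw [h1]
  exact Real.sqrt_le_sqrt
    (Finset.single_le_sum (fun j _ => sq_nonneg (‖x j‖)) (Finset.mem_univ i))

lemma csc_d2_int (hXmeas : Measurable X) (hX2 : Integrable (fun ω => ‖X ω‖ ^ 2) μ)
    (β : EuclideanSpace ℝ (Fin n)) : Integrable (fun ω => ⟪X ω, β⟫ ^ 2) μ := by
  refine (hX2.const_mul (‖β‖ ^ 2)).mono'
    (((hXmeas.inner measurable_const).pow_const 2).aestronglyMeasurable) ?_
  filter_upwards with ω
  have h1 := abs_real_inner_le_norm (X ω) β
  have h2 : (0:ℝ) ≤ ‖X ω‖ := norm_nonneg _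
  have h3 : (0:ℝ) ≤ ‖β‖ := norm_nonneg _
  rw [Real.norm_eq_abs, abs_pow]
  nlinarith [abs_nonneg (⟪X ω, β⟫)]

lemma csc_Yd_int (hYmeas : Measurable Y) (hXmeas : Measurable X)
    (hYX : Integrable (fun ω => ‖Y ω • X ω‖) μ) (β : EuclideanSpace ℝ (Fin n)) :
    Integrable (fun ω => Y ω * ⟪X ω, β⟫) μ := by
  refine (hYX.mul_const ‖β‖).mono'
    ((hYmeas.mul (hXmeas.inner measurable_const)).aestronglyMeasurable) ?_
  filter_upwards with ω
  rw [Real.norm_eq_abs, ← real_inner_smul_left]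
  exact abs_real_inner_le_norm _ _

lemma csc_g_int (hYmeas : Measurable Y) (hXmeas : Measurable X)
    (hX2 : Integrable (fun ω => ‖X ω‖ ^ 2) μ) (hY2 : Integrable (fun ω => (Y ω) ^ 2) μ)
    (hYX : Integrable (fun ω => ‖Y ω • X ω‖) μ) (β : EuclideanSpace ℝ (Fin n)) :
    Integrable (fun ω => (Y ω - ⟪X ω, β⟫) ^ 2) μ := by
  have h : (fun ω => (Y ω - ⟪X ω, β⟫) ^ 2)
      = fun ω => (Y ω) ^ 2 - 2 * (Y ω * ⟪X ω, β⟫) + ⟪X ω, β⟫ ^ 2 := by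
    funext ω; ring
  rw [h]
  exact (hY2.sub ((csc_Yd_int hYmeas hXmeas hYX β).const_mul 2)).add
    (csc_d2_int hXmeas hX2 β)

lemma csc_jk_int (hXmeas : Measurable X) (hX2 : Integrable (fun ω => ‖X ω‖ ^ 2) μ)
    (j k : Fin n) : Integrable (fun ω => X ω j * X ω k) μ := by
  refine hX2.mono'
    (((measurable_pi_apply j).comp (Measurable.comp (g := WithLp.ofLp) (f := X) (WithLp.measurable_ofLp _ _) hXmeas)).mul
      ((measurable_pi_apply k).comp (Measurable.comp (g := WithLp.ofLp) (f := X) (WithLp.measurable_ofLp _ _) hXmeas))).aestronglyMeasurable ?_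
  filter_upwards with ω
  have h1 := csc_abs_apply_le_norm (X ω) j
  have h2 := csc_abs_apply_le_norm (X ω) k
  rw [Real.norm_eq_abs, abs_mul]
  nlinarith [abs_nonneg (X ω j), abs_nonneg (X ω k), norm_nonneg (X ω)]

lemma csc_YXj_int (hYX : Integrable (fun ω => ‖Y ω • X ω‖) μ)
    (hYmeas : Measurable Y) (hXmeas : Measurable X) (j : Fin n) :
    Integrable (fun ω => Y ω * X ω j) μ := by
  refine hYX.mono'
    (hYmeas.mul ((measurable_pi_apply j).comp (Measurable.comp (g := WithLp.ofLp) (f := X) (WithLp.measurable_ofLp _ _) hXmeas))).aestronglyMeasurable ?_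
  filter_upwards with ω
  have : Y ω * X ω j = (Y ω • X ω) j := rfl
  rw [Real.norm_eq_abs, this]
  exact csc_abs_apply_le_norm _ _

/-- Q expansion as polynomial. -/
lemma csc_Q_eq (hXmeas : Measurable X) (hX2 : Integrable (fun ω => ‖X ω‖ ^ 2) μ)
    (u : EuclideanSpace ℝ (Fin n)) :
    ∫ ω, ⟪X ω, u⟫ ^ 2 ∂μ
      = ∑ j, ∑ k, (∫ ω, X ω j * X ω k ∂μ) * (u j * u k) := by
  have h1 : ∀ ω, ⟪X ω, u⟫ ^ 2 = ∑ j, ∑ k, (u j * u k) * (X ω j * X ω k) := by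
    intro ω
    rw [← csc_dot_eq_inner, sq, Finset.sum_mul_sum]
    apply Finset.sum_congr rfl; intro j _
    apply Finset.sum_congr rfl; intro k _
    ring
  simp only [h1]
  rw [integral_finset_sum]
  · apply Finset.sum_congr rfl; intro j _
    rw [integral_finset_sum]
    · apply Finset.sum_congr rfl; intro k _
      rw [integral_const_mul _ _]; ring
    · exact fun k _ => (csc_jk_int hXmeas hX2 j k).const_mul _
  · intro j _
    apply integrable_finset_sum
    exact fun k _ => (csc_jk_int hXmeas hX2 j k).const_mul _

lemma csc_Q_cont (hXmeas : Measurable X) (hX2 : Integrable (fun ω => ‖X ω‖ ^ 2) μ) :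
    Continuous (fun u : EuclideanSpace ℝ (Fin n) => ∫ ω, ⟪X ω, u⟫ ^ 2 ∂μ) := by
  have h : (fun u : EuclideanSpace ℝ (Fin n) => ∫ ω, ⟪X ω, u⟫ ^ 2 ∂μ)
      = fun u => ∑ j, ∑ k, (∫ ω, X ω j * X ω k ∂μ) * (u j * u k) := by
    funext u; exact csc_Q_eq hXmeas hX2 u
  rw [h]
  refine continuous_finset_sum _ (fun j _ => continuous_finset_sum _ (fun k _ => ?_))
  exact continuous_const.mul
    (((EuclideanSpace.proj j).continuous).mul ((EuclideanSpace.proj k).continuous))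

lemma csc_L_eq (hYmeas : Measurable Y) (hXmeas : Measurable X)
    (hYX : Integrable (fun ω => ‖Y ω • X ω‖) μ) (u : EuclideanSpace ℝ (Fin n)) :
    ∫ ω, Y ω * ⟪X ω, u⟫ ∂μ = ∑ j, (∫ ω, Y ω * X ω j ∂μ) * u j := by
  have h1 : ∀ ω, Y ω * ⟪X ω, u⟫ = ∑ j, u j * (Y ω * X ω j) := by
    intro ω
    rw [← csc_dot_eq_inner, Finset.mul_sum]
    apply Finset.sum_congr rfl; intro j _; ring
  simp only [h1]
  rw [integral_finset_sum]
  · apply Finset.sum_congr rfl; intro j _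
    rw [integral_const_mul _ _]; ring
  · exact fun j _ => (csc_YXj_int hYX hYmeas hXmeas j).const_mul _

lemma csc_L_cont (hYmeas : Measurable Y) (hXmeas : Measurable X)
    (hYX : Integrable (fun ω => ‖Y ω • X ω‖) μ) :
    Continuous (fun u : EuclideanSpace ℝ (Fin n) => ∫ ω, Y ω * ⟪X ω, u⟫ ∂μ) := by
  have h : (fun u : EuclideanSpace ℝ (Fin n) => ∫ ω, Y ω * ⟪X ω, u⟫ ∂μ)
      = fun u => ∑ j, (∫ ω, Y ω * X ω j ∂μ) * u j := by
    funext u; exact csc_L_eq hYmeas hXmeas hYX u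
  rw [h]
  exact continuous_finset_sum _
    (fun j _ => continuous_const.mul (EuclideanSpace.proj j).continuous)

lemma csc_g_expand (hYmeas : Measurable Y) (hXmeas : Measurable X)
    (hX2 : Integrable (fun ω => ‖X ω‖ ^ 2) μ) (hY2 : Integrable (fun ω => (Y ω) ^ 2) μ)
    (hYX : Integrable (fun ω => ‖Y ω • X ω‖) μ) (β : EuclideanSpace ℝ (Fin n)) :
    ∫ ω, (Y ω - ⟪X ω, β⟫) ^ 2 ∂μ
      = (∫ ω, (Y ω) ^ 2 ∂μ) - 2 * (∫ ω, Y ω * ⟪X ω, β⟫ ∂μ)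
        + ∫ ω, ⟪X ω, β⟫ ^ 2 ∂μ := by
  have h : (fun ω => (Y ω - ⟪X ω, β⟫) ^ 2)
      = fun ω => ((Y ω) ^ 2 - 2 * (Y ω * ⟪X ω, β⟫)) + ⟪X ω, β⟫ ^ 2 := by
    funext ω; ring
  have hsub : Integrable (fun ω => (Y ω) ^ 2 - 2 * (Y ω * ⟪X ω, β⟫)) μ :=
    hY2.sub ((csc_Yd_int hYmeas hXmeas hYX β).const_mul 2)
  rw [h, integral_add hsub (csc_d2_int hXmeas hX2 β),
    integral_sub hY2 ((csc_Yd_int hYmeas hXmeas hYX β).const_mul 2),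
    integral_const_mul _ _]

lemma csc_Q_smul (c : ℝ) (u : EuclideanSpace ℝ (Fin n)) :
    ∫ ω, ⟪X ω, c • u⟫ ^ 2 ∂μ = c ^ 2 * ∫ ω, ⟪X ω, u⟫ ^ 2 ∂μ := by
  simp only [real_inner_smul_right, mul_pow]
  exact integral_const_mul _ _

lemma csc_Q_pos (hXmeas : Measurable X) (hX2 : Integrable (fun ω => ‖X ω‖ ^ 2) μ)
    {u : EuclideanSpace ℝ (Fin n)} (hu : μ {ω | ⟪X ω, u⟫ = 0} = 0) :
    0 < ∫ ω, ⟪X ω, u⟫ ^ 2 ∂μ := by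
  rw [integral_pos_iff_support_of_nonneg_ae
    (Filter.Eventually.of_forall fun ω => sq_nonneg _) (csc_d2_int hXmeas hX2 u)]
  have hsupp : Function.support (fun ω => ⟪X ω, u⟫ ^ 2) = {ω | ⟪X ω, u⟫ = 0}ᶜ := by
    ext ω; simp [Function.mem_support, pow_eq_zero_iff]
  rw [hsupp]
  have h2 : μ Set.univ ≤ μ {ω | ⟪X ω, u⟫ = 0} + μ ({ω | ⟪X ω, u⟫ = 0}ᶜ) := by
    rw [← Set.union_compl_self {ω | ⟪X ω, u⟫ = 0}]
    exact measure_union_le _ _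
  rw [measure_univ, hu, zero_add] at h2
  exact lt_of_lt_of_le zero_lt_one h2

lemma csc_L_bound (hYmeas : Measurable Y) (hXmeas : Measurable X)
    (hYX : Integrable (fun ω => ‖Y ω • X ω‖) μ) (β : EuclideanSpace ℝ (Fin n)) :
    |∫ ω, Y ω * ⟪X ω, β⟫ ∂μ| ≤ (∫ ω, ‖Y ω • X ω‖ ∂μ) * ‖β‖ := by
  rw [← Real.norm_eq_abs]
  refine (norm_integral_le_integral_norm _).trans ?_
  rw [← integral_mul_const]
  refine integral_mono (csc_Yd_int hYmeas hXmeas hYX β).norm (hYX.mul_const _) ?_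
  intro ω
  show ‖Y ω * ⟪X ω, β⟫‖ ≤ ‖Y ω • X ω‖ * ‖β‖
  rw [Real.norm_eq_abs, ← real_inner_smul_left]
  exact abs_real_inner_le_norm _ _

lemma csc_g_mid (hYmeas : Measurable Y) (hXmeas : Measurable X)
    (hX2 : Integrable (fun ω => ‖X ω‖ ^ 2) μ) (hY2 : Integrable (fun ω => (Y ω) ^ 2) μ)
    (hYX : Integrable (fun ω => ‖Y ω • X ω‖) μ) (β γ : EuclideanSpace ℝ (Fin n)) :
    ∫ ω, (Y ω - ⟪X ω, (2⁻¹:ℝ) • β + (2⁻¹:ℝ) • γ⟫) ^ 2 ∂μ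
      = 2⁻¹ * (∫ ω, (Y ω - ⟪X ω, β⟫) ^ 2 ∂μ) + 2⁻¹ * (∫ ω, (Y ω - ⟪X ω, γ⟫) ^ 2 ∂μ)
        - 4⁻¹ * ∫ ω, ⟪X ω, β - γ⟫ ^ 2 ∂μ := by
  have hmid : ∀ ω, (Y ω - ⟪X ω, (2⁻¹:ℝ) • β + (2⁻¹:ℝ) • γ⟫) ^ 2
      = (2⁻¹ * (Y ω - ⟪X ω, β⟫) ^ 2 + 2⁻¹ * (Y ω - ⟪X ω, γ⟫) ^ 2)
        - 4⁻¹ * ⟪X ω, β - γ⟫ ^ 2 := by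
    intro ω
    rw [inner_add_right, real_inner_smul_right, real_inner_smul_right, inner_sub_right]
    ring
  simp only [hmid]
  have int1 : Integrable (fun ω => 2⁻¹ * (Y ω - ⟪X ω, β⟫) ^ 2) μ :=
    (csc_g_int hYmeas hXmeas hX2 hY2 hYX β).const_mul _
  have int2 : Integrable (fun ω => 2⁻¹ * (Y ω - ⟪X ω, γ⟫) ^ 2) μ :=
    (csc_g_int hYmeas hXmeas hX2 hY2 hYX γ).const_mul _
  have int3 : Integrable (fun ω => (4⁻¹:ℝ) * ⟪X ω, β - γ⟫ ^ 2) μ :=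
    (csc_d2_int hXmeas hX2 (β - γ)).const_mul _
  have int12 : Integrable (fun ω => 2⁻¹ * (Y ω - ⟪X ω, β⟫) ^ 2
      + 2⁻¹ * (Y ω - ⟪X ω, γ⟫) ^ 2) μ := int1.add int2
  rw [integral_sub int12 int3, integral_add int1 int2,
    integral_const_mul, integral_const_mul, integral_const_mul]

lemma csc_h_cont {q : ℕ} (A : Matrix (Fin q) (Fin n) ℝ) (lam : ℝ) :
    Continuous (fun β : EuclideanSpace ℝ (Fin n) => lam * ∑ i, |A.mulVec β i|) := by
  refine continuous_const.mul (continuous_finset_sum _ fun i _ => Continuous.abs ?_)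
  have h : (fun β : EuclideanSpace ℝ (Fin n) => A.mulVec β i)
      = fun β => ∑ j, A i j * β j := by
    funext β; simp [Matrix.mulVec, dotProduct]
  rw [h]
  exact continuous_finset_sum _ fun j _ =>
    continuous_const.mul (EuclideanSpace.proj j).continuous

lemma csc_h_half {q : ℕ} (A : Matrix (Fin q) (Fin n) ℝ) {lam : ℝ} (hlam : 0 ≤ lam)
    (β γ : EuclideanSpace ℝ (Fin n)) :
    lam * ∑ i, |A.mulVec ((2⁻¹:ℝ) • β + (2⁻¹:ℝ) • γ) i|
      ≤ 2⁻¹ * (lam * ∑ i, |A.mulVec β i|) + 2⁻¹ * (lam * ∑ i, |A.mulVec γ i|) := by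
  have hv : ∀ i, A.mulVec ((2⁻¹:ℝ) • β + (2⁻¹:ℝ) • γ) i
      = 2⁻¹ * A.mulVec β i + 2⁻¹ * A.mulVec γ i := by
    intro i
    simp only [Matrix.mulVec, dotProduct, PiLp.add_apply, PiLp.smul_apply,
      Pi.add_apply, Pi.smul_apply, smul_eq_mul, Finset.mul_sum]
    rw [← Finset.sum_add_distrib]
    exact Finset.sum_congr rfl fun j _ => by ring
  have hsum : ∑ i, |A.mulVec ((2⁻¹:ℝ) • β + (2⁻¹:ℝ) • γ) i|
      ≤ ∑ i, (2⁻¹ * |A.mulVec β i| + 2⁻¹ * |A.mulVec γ i|) := by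
    refine Finset.sum_le_sum fun i _ => ?_
    rw [hv i]
    calc |2⁻¹ * A.mulVec β i + 2⁻¹ * A.mulVec γ i|
        ≤ |2⁻¹ * A.mulVec β i| + |2⁻¹ * A.mulVec γ i| := abs_add_le _ _
      _ = 2⁻¹ * |A.mulVec β i| + 2⁻¹ * |A.mulVec γ i| := by
          have habs2 : |(2⁻¹:ℝ)| = 2⁻¹ := abs_of_nonneg (by norm_num)
          rw [abs_mul, abs_mul, habs2]
  calc lam * ∑ i, |A.mulVec ((2⁻¹:ℝ) • β + (2⁻¹:ℝ) • γ) i|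
      ≤ lam * ∑ i, (2⁻¹ * |A.mulVec β i| + 2⁻¹ * |A.mulVec γ i|) :=
        mul_le_mul_of_nonneg_left hsum hlam
    _ = 2⁻¹ * (lam * ∑ i, |A.mulVec β i|) + 2⁻¹ * (lam * ∑ i, |A.mulVec γ i|) := by
        rw [Finset.sum_add_distrib, ← Finset.mul_sum, ← Finset.mul_sum]; ring

end CSCAux

theorem true_csclasso_unique_optimal_solution
    {Ω : Type*} [MeasurableSpace Ω] (μ : Measure Ω) [IsProbabilityMeasure μ]
    (p q : ℕ) (Y : Ω → ℝ) (X : Ω → EuclideanSpace ℝ (Fin (p + 1)))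
    (hYmeas : Measurable Y) (hXmeas : Measurable X)
    (habs : ∀ u : EuclideanSpace ℝ (Fin (p + 1)), u ≠ 0 →
      μ {ω | ∑ i, X ω i * u i = 0} = 0)
    (hX2 : Integrable (fun ω => ‖X ω‖ ^ 2) μ)
    (hY2 : Integrable (fun ω => (Y ω) ^ 2) μ)
    (hYX : Integrable (fun ω => ‖Y ω • X ω‖) μ)
    (A : Matrix (Fin q) (Fin (p + 1)) ℝ) (lam : ℝ) (hlam : 0 ≤ lam)
    (B : Set (EuclideanSpace ℝ (Fin (p + 1))))
    (hBne : B.Nonempty) (hBclosed : IsClosed B) (hBconv : Convex ℝ B) :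
    ∃! β₀ : EuclideanSpace ℝ (Fin (p + 1)), β₀ ∈ B ∧
      ∀ β ∈ B,
        (∫ ω, ((Y ω - ∑ j, X ω j * β₀ j) ^ 2 + lam * ∑ i, |A.mulVec β₀ i|) ∂μ) ≤
          ∫ ω, ((Y ω - ∑ j, X ω j * β j) ^ 2 + lam * ∑ i, |A.mulVec β i|) ∂μ := by
  classical
  set F : EuclideanSpace ℝ (Fin (p + 1)) → ℝ :=
    fun β => (∫ ω, (Y ω - ⟪X ω, β⟫) ^ 2 ∂μ) + lam * ∑ i, |A.mulVec β i| with hF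
  -- the stated integral equals F
  have hstate : ∀ β : EuclideanSpace ℝ (Fin (p + 1)),
      (∫ ω, ((Y ω - ∑ j, X ω j * β j) ^ 2 + lam * ∑ i, |A.mulVec β i|) ∂μ) = F β := by
    intro β
    have h1 : (fun ω => (Y ω - ∑ j, X ω j * β j) ^ 2 + lam * ∑ i, |A.mulVec β i|)
        = fun ω => (Y ω - ⟪X ω, β⟫) ^ 2 + lam * ∑ i, |A.mulVec β i| := by
      funext ω; rw [csc_dot_eq_inner]
    rw [h1, integral_add (csc_g_int hYmeas hXmeas hX2 hY2 hYX β) (integrable_const _),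
      integral_const, probReal_univ, one_smul, hF]
  -- continuity of F
  have hF_cont : Continuous F := by
    rw [hF]
    have hgc : Continuous (fun β : EuclideanSpace ℝ (Fin (p + 1)) =>
        ∫ ω, (Y ω - ⟪X ω, β⟫) ^ 2 ∂μ) := by
      have he : (fun β : EuclideanSpace ℝ (Fin (p + 1)) => ∫ ω, (Y ω - ⟪X ω, β⟫) ^ 2 ∂μ)
          = fun β => (∫ ω, (Y ω) ^ 2 ∂μ) - 2 * (∫ ω, Y ω * ⟪X ω, β⟫ ∂μ)
            + ∫ ω, ⟪X ω, β⟫ ^ 2 ∂μ :=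
        funext (csc_g_expand hYmeas hXmeas hX2 hY2 hYX)
      rw [he]
      exact (continuous_const.sub
        (continuous_const.mul (csc_L_cont hYmeas hXmeas hYX))).add (csc_Q_cont hXmeas hX2)
    exact hgc.add (csc_h_cont A lam)
  -- positivity of the quadratic form
  have habs' : ∀ u : EuclideanSpace ℝ (Fin (p + 1)), u ≠ 0 →
      0 < ∫ ω, ⟪X ω, u⟫ ^ 2 ∂μ := by
    intro u hu
    refine csc_Q_pos hXmeas hX2 ?_
    have hset : {ω | ⟪X ω, u⟫ = 0} = {ω | ∑ i, X ω i * u i = 0} :=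
      Set.ext fun ω => by rw [Set.mem_setOf_eq, Set.mem_setOf_eq, csc_dot_eq_inner]
    rw [hset]; exact habs u hu
  -- coercivity constant
  have hsne : (Metric.sphere (0 : EuclideanSpace ℝ (Fin (p + 1))) 1).Nonempty := by
    refine ⟨EuclideanSpace.single 0 1, ?_⟩
    rw [mem_sphere_zero_iff_norm, EuclideanSpace.norm_single]
    norm_num
  obtain ⟨u₀, hu₀s, hu₀min⟩ :=
    (isCompact_sphere (0 : EuclideanSpace ℝ (Fin (p + 1))) 1).exists_isMinOn hsne
      ((csc_Q_cont hXmeas hX2).continuousOn)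
  have hu₀norm : ‖u₀‖ = 1 := mem_sphere_zero_iff_norm.mp hu₀s
  have hu₀ne : u₀ ≠ 0 := by
    intro h; rw [h, norm_zero] at hu₀norm; norm_num at hu₀norm
  set c := ∫ ω, ⟪X ω, u₀⟫ ^ 2 ∂μ with hc
  have hcpos : 0 < c := habs' u₀ hu₀ne
  have hQge : ∀ u : EuclideanSpace ℝ (Fin (p + 1)),
      c * ‖u‖ ^ 2 ≤ ∫ ω, ⟪X ω, u⟫ ^ 2 ∂μ := by
    intro u
    rcases eq_or_ne u 0 with rfl | hu
    · calc c * ‖(0 : EuclideanSpace ℝ (Fin (p + 1)))‖ ^ 2 = 0 := by rw [norm_zero]; ring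
        _ ≤ ∫ ω, ⟪X ω, (0 : EuclideanSpace ℝ (Fin (p + 1)))⟫ ^ 2 ∂μ :=
            integral_nonneg fun ω => sq_nonneg _
    · have hnu : ‖u‖ ≠ 0 := norm_ne_zero_iff.mpr hu
      have h2 : ∫ ω, ⟪X ω, u⟫ ^ 2 ∂μ = ‖u‖ ^ 2 * ∫ ω, ⟪X ω, ‖u‖⁻¹ • u⟫ ^ 2 ∂μ := by
        conv_lhs => rw [← smul_inv_smul₀ hnu u]
        rw [csc_Q_smul]
      have h3 : ‖u‖⁻¹ • u ∈ Metric.sphere (0 : EuclideanSpace ℝ (Fin (p + 1))) 1 := by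
        rw [mem_sphere_zero_iff_norm, norm_smul, norm_inv, norm_norm,
          inv_mul_cancel₀ hnu]
      have h4 : c ≤ ∫ ω, ⟪X ω, ‖u‖⁻¹ • u⟫ ^ 2 ∂μ := isMinOn_iff.mp hu₀min _ h3
      rw [h2]
      nlinarith [sq_nonneg ‖u‖]
  -- lower bound for F
  set CY := ∫ ω, ‖Y ω • X ω‖ ∂μ with hCY
  have hCY0 : 0 ≤ CY := integral_nonneg fun ω => norm_nonneg _
  have hFlow : ∀ β : EuclideanSpace ℝ (Fin (p + 1)),
      c * ‖β‖ ^ 2 - 2 * CY * ‖β‖ ≤ F β := by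
    intro β
    have he := csc_g_expand hYmeas hXmeas hX2 hY2 hYX β
    have hL := csc_L_bound hYmeas hXmeas hYX β
    have hL1 : ∫ ω, Y ω * ⟪X ω, β⟫ ∂μ ≤ CY * ‖β‖ :=
      le_trans (le_abs_self _) hL
    have hQ := hQge β
    have hY2n : 0 ≤ ∫ ω, (Y ω) ^ 2 ∂μ := integral_nonneg fun ω => sq_nonneg _
    have hh0 : 0 ≤ lam * ∑ i, |A.mulVec β i| :=
      mul_nonneg hlam (Finset.sum_nonneg fun i _ => abs_nonneg _)
    have hFβ : F β = ((∫ ω, (Y ω) ^ 2 ∂μ) - 2 * (∫ ω, Y ω * ⟪X ω, β⟫ ∂μ)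
        + ∫ ω, ⟪X ω, β⟫ ^ 2 ∂μ) + lam * ∑ i, |A.mulVec β i| := by
      rw [hF]; dsimp only; rw [he]
    rw [hFβ]
    nlinarith
  clear_value F c CY
  -- existence of a minimizer
  obtain ⟨β₁, hβ₁⟩ := hBne
  have hSclosed : IsClosed (B ∩ {β | F β ≤ F β₁}) :=
    hBclosed.inter (isClosed_le hF_cont continuous_const)
  have hβ₁S : β₁ ∈ B ∩ {β | F β ≤ F β₁} := ⟨hβ₁, le_refl (F β₁)⟩
  have hSbdd : Bornology.IsBounded (B ∩ {β | F β ≤ F β₁}) := by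
    rw [Metric.isBounded_iff_subset_closedBall 0]
    refine ⟨max 1 ((|F β₁| + 2 * CY + 1) / c), fun β hβ => ?_⟩
    rw [Metric.mem_closedBall, dist_zero_right]
    by_contra hcon
    push_neg at hcon
    have hβ1 : 1 < ‖β‖ := lt_of_le_of_lt (le_max_left _ _) hcon
    have hβ2 : (|F β₁| + 2 * CY + 1) / c < ‖β‖ := lt_of_le_of_lt (le_max_right _ _) hcon
    have hβ3 : |F β₁| + 2 * CY + 1 < c * ‖β‖ := by
      rw [div_lt_iff₀ hcpos] at hβ2; linarith [hβ2]
    have h1 : c * ‖β‖ ^ 2 - 2 * CY * ‖β‖ ≤ F β₁ := le_trans (hFlow β) hβ.2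
    have h2 : F β₁ ≤ |F β₁| := le_abs_self _
    nlinarith [mul_pos (sub_pos.mpr hβ3) (sub_pos.mpr hβ1), abs_nonneg (F β₁)]
  have hScomp : IsCompact (B ∩ {β | F β ≤ F β₁}) :=
    Metric.isCompact_of_isClosed_isBounded hSclosed hSbdd
  obtain ⟨β₀, hβ₀S, hβ₀min⟩ := hScomp.exists_isMinOn ⟨β₁, hβ₁S⟩ hF_cont.continuousOn
  have hβ₀B : β₀ ∈ B := hβ₀S.1
  have hminB : ∀ β ∈ B, F β₀ ≤ F β := by
    intro β hβ
    by_cases hc2 : F β ≤ F β₁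
    · exact isMinOn_iff.mp hβ₀min β ⟨hβ, hc2⟩
    · exact le_trans (isMinOn_iff.mp hβ₀min β₁ hβ₁S) (le_of_not_ge hc2)
  -- strict convexity at midpoints
  have hstrict : ∀ β γ : EuclideanSpace ℝ (Fin (p + 1)), β ≠ γ →
      F ((2⁻¹ : ℝ) • β + (2⁻¹ : ℝ) • γ) < 2⁻¹ * F β + 2⁻¹ * F γ := by
    intro β γ hne
    have hg := csc_g_mid hYmeas hXmeas hX2 hY2 hYX β γ
    have hh := csc_h_half A hlam β γ
    have hQp : 0 < ∫ ω, ⟪X ω, β - γ⟫ ^ 2 ∂μ := habs' _ (sub_ne_zero.mpr hne)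
    have hFm : F ((2⁻¹ : ℝ) • β + (2⁻¹ : ℝ) • γ)
        = (∫ ω, (Y ω - ⟪X ω, (2⁻¹ : ℝ) • β + (2⁻¹ : ℝ) • γ⟫) ^ 2 ∂μ)
          + lam * ∑ i, |A.mulVec ((2⁻¹ : ℝ) • β + (2⁻¹ : ℝ) • γ) i| := by rw [hF]; rfl
    have hFβ : F β = (∫ ω, (Y ω - ⟪X ω, β⟫) ^ 2 ∂μ) + lam * ∑ i, |A.mulVec β i| := by
      rw [hF]
    have hFγ : F γ = (∫ ω, (Y ω - ⟪X ω, γ⟫) ^ 2 ∂μ) + lam * ∑ i, |A.mulVec γ i| := by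
      rw [hF]
    rw [hFm, hFβ, hFγ, hg]
    linarith
  -- conclusion
  refine ⟨β₀, ⟨hβ₀B, fun β hβ => ?_⟩, ?_⟩
  · rw [hstate β₀, hstate β]; exact hminB β hβ
  · rintro β' ⟨hβ'B, hβ'min⟩
    by_contra hne
    have hmin' : ∀ β ∈ B, F β' ≤ F β := by
      intro β hβ
      have := hβ'min β hβ
      rwa [hstate β', hstate β] at this
    have hmid : (2⁻¹ : ℝ) • β' + (2⁻¹ : ℝ) • β₀ ∈ B :=
      hBconv hβ'B hβ₀B (by norm_num) (by norm_num) (by norm_num)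
    have h1 : F ((2⁻¹ : ℝ) • β' + (2⁻¹ : ℝ) • β₀) < 2⁻¹ * F β' + 2⁻¹ * F β₀ :=
      hstrict β' β₀ hne
    have h2 : F β' ≤ F ((2⁻¹ : ℝ) • β' + (2⁻¹ : ℝ) • β₀) := hmin' _ hmid
    have h4 : F β₀ ≤ F β' := hminB β' hβ'B
    have h5 : F β' < 2⁻¹ * F β' + 2⁻¹ * F β₀ := lt_of_le_of_lt h2 h1
    linarith
end

section
/- Let B ⊆ ℝ^{p+1} be nonempty closed convex, X full column rank, and for λ ≥ 0 let β̂(λ) be the unique minimizer over B of f_λ(β) = (1/n)‖y − Xβ‖² + λ‖Aβ‖₁. Suppose β^∞ is a minimizer over B of ‖Aβ‖₁ that additionally minimizes (1/n)‖y − Xβ‖² among all minimizers of ‖Aβ‖₁ over B. Then ‖Aβ̂(λ)‖₁ → ‖Aβ^∞‖₁ as λ → +∞. -/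
open Matrix Filter

theorem penalty_value_limit
    (n p q : ℕ) (y : EuclideanSpace ℝ (Fin n))
    (X : Matrix (Fin n) (Fin (p + 1)) ℝ) (hX : X.rank = p + 1)
    (A : Matrix (Fin q) (Fin (p + 1)) ℝ)
    (B : Set (EuclideanSpace ℝ (Fin (p + 1))))
    (hBne : B.Nonempty) (hBclosed : IsClosed B) (hBconv : Convex ℝ B)
    (βhat : ℝ → EuclideanSpace ℝ (Fin (p + 1)))
    (hβhat : ∀ lam : ℝ, 0 ≤ lam →
      βhat lam ∈ B ∧
      (∀ β ∈ B,
        (1 / (n : ℝ)) * ‖y - (show EuclideanSpace ℝ (Fin n) from WithLp.toLp 2 (X.mulVec (βhat lam)))‖ ^ 2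
            + lam * ∑ i, |A.mulVec (βhat lam) i| ≤
          (1 / (n : ℝ)) * ‖y - (show EuclideanSpace ℝ (Fin n) from WithLp.toLp 2 (X.mulVec β))‖ ^ 2
            + lam * ∑ i, |A.mulVec β i|) ∧
      (∀ β ∈ B,
        (∀ β' ∈ B,
          (1 / (n : ℝ)) * ‖y - (show EuclideanSpace ℝ (Fin n) from WithLp.toLp 2 (X.mulVec β))‖ ^ 2
              + lam * ∑ i, |A.mulVec β i| ≤
            (1 / (n : ℝ)) * ‖y - (show EuclideanSpace ℝ (Fin n) from WithLp.toLp 2 (X.mulVec β'))‖ ^ 2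
              + lam * ∑ i, |A.mulVec β' i|) → β = βhat lam))
    (βinf : EuclideanSpace ℝ (Fin (p + 1)))
    (hβinfB : βinf ∈ B)
    (hβinfmin : ∀ β ∈ B, ∑ i, |A.mulVec βinf i| ≤ ∑ i, |A.mulVec β i|)
    (hβinfq : ∀ β ∈ B, (∀ β' ∈ B, ∑ i, |A.mulVec β i| ≤ ∑ i, |A.mulVec β' i|) →
      (1 / (n : ℝ)) * ‖y - (show EuclideanSpace ℝ (Fin n) from WithLp.toLp 2 (X.mulVec βinf))‖ ^ 2 ≤
        (1 / (n : ℝ)) * ‖y - (show EuclideanSpace ℝ (Fin n) from WithLp.toLp 2 (X.mulVec β))‖ ^ 2) :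
    Tendsto (fun lam => ∑ i, |A.mulVec (βhat lam) i|) atTop
      (nhds (∑ i, |A.mulVec βinf i|)) := by

  set L : ℝ := ∑ i, |A.mulVec βinf i| with hL
  set C : ℝ := (1 / (n : ℝ)) * ‖y - (show EuclideanSpace ℝ (Fin n) from WithLp.toLp 2 (X.mulVec βinf))‖ ^ 2 with hC
  have hCnn : 0 ≤ C := by positivity
  have key : ∀ lam : ℝ, 1 ≤ lam →
      L ≤ ∑ i, |A.mulVec (βhat lam) i| ∧ ∑ i, |A.mulVec (βhat lam) i| ≤ L + C / lam := by
    intro lam hlam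
    have hlam0 : (0:ℝ) < lam := lt_of_lt_of_le one_pos hlam
    obtain ⟨hmem, hopt, _⟩ := hβhat lam hlam0.le
    have h1 := hopt βinf hβinfB
    have h2 := hβinfmin (βhat lam) hmem
    constructor
    · exact h2
    · have h3 : lam * ∑ i, |A.mulVec (βhat lam) i| ≤ C + lam * L := by
        have hnn : 0 ≤ (1 / (n : ℝ)) * ‖y - (show EuclideanSpace ℝ (Fin n) from WithLp.toLp 2 (X.mulVec (βhat lam)))‖ ^ 2 := by positivity
        linarith
      have h4 : ∑ i, |A.mulVec (βhat lam) i| ≤ (C + lam * L) / lam :=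
        (le_div_iff₀' hlam0).mpr (by linarith)
      calc ∑ i, |A.mulVec (βhat lam) i| ≤ (C + lam * L) / lam := h4
        _ = L + C / lam := by field_simp; ring
  have hlow : ∀ᶠ lam in atTop, L ≤ ∑ i, |A.mulVec (βhat lam) i| :=
    eventually_atTop.2 ⟨1, fun lam h => (key lam h).1⟩
  have hhigh : ∀ᶠ lam in atTop, ∑ i, |A.mulVec (βhat lam) i| ≤ L + C / lam :=
    eventually_atTop.2 ⟨1, fun lam h => (key lam h).2⟩
  have hub : Tendsto (fun lam : ℝ => L + C / lam) atTop (nhds L) := by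
    have : Tendsto (fun lam : ℝ => C / lam) atTop (nhds 0) :=
      Tendsto.const_div_atTop tendsto_id C
    simpa using tendsto_const_nhds.add this
  exact tendsto_of_tendsto_of_tendsto_of_le_of_le' tendsto_const_nhds hub hlow hhigh
end
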